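/- arXiv:1102.3517 — 5 statements merged into one kernel-verified Lean document; each statement's English description precedes it below -/
import Mathlib

section
/- Let {ξₖ}_{k≥0} be i.i.d. complex random variables with E[log(1+|ξ₀|)] < ∞ and P(ξ₀ = 0) < 1. Then with probability one the radius of convergence of the power series ∑_{k=0}^∞ ξₖ z^k equals 1. -/
open MeasureTheory ProbabilityTheory Filter Topology
open scoped ENNReal

theorem radius_of_convergence_one {Ω : Type*} [MeasureSpace Ω]
    [IsProbabilityMeasure (ℙ : Measure Ω)] (ξ : ℕ → Ω → ℂ)
    (hm : ∀ k, Measurable (ξ k))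
    (hindep : iIndepFun ξ ℙ)
    (hid : ∀ k, IdentDistrib (ξ k) (ξ 0) ℙ ℙ)
    (hint : Integrable (fun ω => Real.log (1 + ‖ξ 0 ω‖)))
    (hnz : ℙ {ω | ξ 0 ω = 0} < 1) :
    ℙ {ω | Filter.limsup (fun k : ℕ => (‖ξ k ω‖₊ : ENNReal) ^ ((1 : ℝ) / k)) atTop = 1} = 1 := by
  have habs : Measurable (fun z : ℂ => ‖z‖) := continuous_norm.measurable
  set g : ℂ → ℝ := fun z => Real.log (1 + ‖z‖) with hg_def
  have hg : Measurable g := (measurable_const.add habs).log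
  -- Upper bound
  have upper : ∀ᵐ ω ∂ℙ,
      limsup (fun k : ℕ => (‖ξ k ω‖₊ : ENNReal) ^ ((1 : ℝ) / k)) atTop ≤ 1 := by
    have key : ∀ n : ℕ, ∀ᵐ ω ∂ℙ,
        limsup (fun k : ℕ => (‖ξ k ω‖₊ : ENNReal) ^ ((1 : ℝ) / k)) atTop
          ≤ ENNReal.ofReal (Real.exp (1 / ((n : ℝ) + 1))) := by
      intro n
      set ε : ℝ := 1 / ((n : ℝ) + 1) with hε_def
      have hε : 0 < ε := by positivity
      have hXnn : 0 ≤ fun ω => g (ξ 0 ω) / ε := by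
        intro ω
        have : (0:ℝ) ≤ g (ξ 0 ω) :=
          Real.log_nonneg (by have := norm_nonneg (ξ 0 ω); linarith)
        exact div_nonneg this hε.le
      have hXint : Integrable (fun ω => g (ξ 0 ω) / ε) := hint.div_const ε
      have hsum : (∑' k : ℕ, ℙ {ω | ε * k < g (ξ k ω)}) ≠ ∞ := by
        have heq : ∀ k : ℕ,
            ℙ {ω | ε * k < g (ξ k ω)} = ℙ {ω | g (ξ 0 ω) / ε ∈ Set.Ioi (k : ℝ)} := by
          intro k
          have h2 := ((hid k).comp hg).measure_mem_eq (measurableSet_Ioi (a := ε * k))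
          have h1 : {ω | ε * k < g (ξ k ω)} = (g ∘ ξ k) ⁻¹' Set.Ioi (ε * k) := rfl
          have h3 : {ω | g (ξ 0 ω) / ε ∈ Set.Ioi (k : ℝ)} = (g ∘ ξ 0) ⁻¹' Set.Ioi (ε * k) := by
            ext ω
            simp only [Set.mem_setOf_eq, Set.mem_Ioi, Set.mem_preimage, Function.comp_apply]
            rw [lt_div_iff₀ hε, mul_comm]
          rw [h1, h3, h2]
        have hlt : (∑' k : ℕ, ℙ {ω | ε * k < g (ξ k ω)}) < ∞ := by
          rw [tsum_congr heq]
          exact tsum_prob_mem_Ioi_lt_top hXint hXnn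
        exact hlt.ne
      have hBC := measure_limsup_atTop_eq_zero
        (s := fun k => {ω | ε * k < g (ξ k ω)}) hsum
      rw [measure_eq_zero_iff_ae_notMem] at hBC
      filter_upwards [hBC] with ω hω
      have h1 : ∀ᶠ k : ℕ in atTop, ¬ (ε * k < g (ξ k ω)) := by
        rw [mem_limsup_iff_frequently_mem] at hω
        exact not_frequently.mp hω
      have hev : ∀ᶠ k : ℕ in atTop,
          (‖ξ k ω‖₊ : ENNReal) ^ ((1 : ℝ) / k) ≤ ENNReal.ofReal (Real.exp ε) := by
        filter_upwards [h1, eventually_ge_atTop 1] with k hk hk1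
        push_neg at hk
        have hpos : (0:ℝ) < 1 + ‖ξ k ω‖ := by
          have := norm_nonneg (ξ k ω); linarith
        have hle : ‖ξ k ω‖ ≤ Real.exp (ε * k) := by
          have h4 : (1:ℝ) + ‖ξ k ω‖ ≤ Real.exp (ε * k) := by
            calc (1:ℝ) + ‖ξ k ω‖ = Real.exp (g (ξ k ω)) :=
                  (Real.exp_log hpos).symm
              _ ≤ Real.exp (ε * k) := Real.exp_le_exp.2 hk
          have h5 : ‖ξ k ω‖ = ‖ξ k ω‖ := rfl
          linarith [norm_nonneg (ξ k ω)]
        have hk0 : (k : ℝ) ≠ 0 := by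
          have : (1:ℝ) ≤ (k : ℝ) := by exact_mod_cast hk1
          linarith
        calc (‖ξ k ω‖₊ : ENNReal) ^ ((1 : ℝ) / k)
            ≤ (ENNReal.ofReal (Real.exp (ε * k))) ^ ((1 : ℝ) / k) := by
              rw [← ENNReal.ofReal_coe_nnreal, coe_nnnorm]
              exact ENNReal.rpow_le_rpow (ENNReal.ofReal_le_ofReal hle) (by positivity)
          _ = ENNReal.ofReal ((Real.exp (ε * k)) ^ ((1 : ℝ) / k)) :=
              ENNReal.ofReal_rpow_of_pos (Real.exp_pos _)
          _ = ENNReal.ofReal (Real.exp ε) := by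
              rw [← Real.exp_mul]
              congr 1
              field_simp
      exact limsup_le_of_le (h := hev)
    rw [← ae_all_iff] at key
    filter_upwards [key] with ω hω
    have htend : Tendsto (fun n : ℕ => ENNReal.ofReal (Real.exp (1 / ((n : ℝ) + 1)))) atTop
        (𝓝 1) := by
      have h1 : Tendsto (fun n : ℕ => Real.exp (1 / ((n : ℝ) + 1))) atTop (𝓝 1) := by
        have := Real.continuous_exp.continuousAt (x := (0:ℝ))
        have h2 := this.tendsto.comp tendsto_one_div_add_atTop_nhds_zero_nat
        simpa [Function.comp_def] using h2
      have h3 := (ENNReal.continuous_ofReal.continuousAt (x := (1:ℝ))).tendsto.comp h1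
      simpa [Function.comp_def] using h3
    exact ge_of_tendsto' htend hω
  -- Lower bound
  have lower : ∀ᵐ ω ∂ℙ,
      (1 : ENNReal) ≤ limsup (fun k : ℕ => (‖ξ k ω‖₊ : ENNReal) ^ ((1 : ℝ) / k)) atTop := by
    obtain ⟨n, hn⟩ : ∃ n : ℕ, ℙ {ω | 1 / ((n : ℝ) + 1) < ‖ξ 0 ω‖} ≠ 0 := by
      by_contra h
      push_neg at h
      have hU : {ω | ξ 0 ω ≠ 0} ⊆ ⋃ n : ℕ, {ω | 1 / ((n : ℝ) + 1) < ‖ξ 0 ω‖} := by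
        intro ω hω
        obtain ⟨m, hm'⟩ := exists_nat_one_div_lt (norm_pos_iff.2 hω)
        exact Set.mem_iUnion.2 ⟨m, hm'⟩
      have hz : ℙ {ω | ξ 0 ω ≠ 0} = 0 :=
        measure_mono_null hU (by rw [measure_iUnion_null_iff]; exact h)
      have hone : (1 : ENNReal) ≤ ℙ {ω | ξ 0 ω = 0} := by
        have hcover : (Set.univ : Set Ω) ⊆ {ω | ξ 0 ω = 0} ∪ {ω | ξ 0 ω ≠ 0} := by
          intro ω _
          by_cases hξ : ξ 0 ω = 0
          · exact Or.inl hξ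
          · exact Or.inr hξ
        calc (1 : ENNReal) = ℙ (Set.univ : Set Ω) := measure_univ.symm
          _ ≤ ℙ ({ω | ξ 0 ω = 0} ∪ {ω | ξ 0 ω ≠ 0}) := measure_mono hcover
          _ ≤ ℙ {ω | ξ 0 ω = 0} + ℙ {ω | ξ 0 ω ≠ 0} := measure_union_le _ _
          _ = ℙ {ω | ξ 0 ω = 0} := by rw [hz, add_zero]
      exact absurd hnz (not_lt.2 hone)
    set c : ℝ := 1 / ((n : ℝ) + 1) with hc_def
    have hc : 0 < c := by positivity
    set B : ℕ → Set Ω := fun k => {ω | c < ‖ξ k ω‖} with hB_def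
    have hBmeas : ∀ k, MeasurableSet (B k) := fun k => (hm k) (habs measurableSet_Ioi)
    have hBindep : iIndepSet B ℙ := by
      rw [iIndepSet_iff_meas_biInter hBmeas]
      intro s
      exact hindep.meas_biInter fun i _ => ⟨(fun z : ℂ => ‖z‖) ⁻¹' Set.Ioi c,
        habs measurableSet_Ioi, rfl⟩
    have hBid : ∀ k, ℙ (B k) = ℙ (B 0) := fun k =>
      ((hid k).comp habs).measure_mem_eq (measurableSet_Ioi (a := c))
    have htsum : (∑' k, ℙ (B k)) = ∞ := by
      calc (∑' k, ℙ (B k)) = ∑' _ : ℕ, ℙ (B 0) := tsum_congr hBid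
        _ = ∞ := ENNReal.tsum_const_eq_top_of_ne_zero hn
    have hBC := measure_limsup_eq_one hBmeas hBindep htsum
    have hae : ∀ᵐ ω ∂ℙ, ω ∈ limsup B atTop := by
      have hms : MeasurableSet (limsup B atTop) := MeasurableSet.measurableSet_limsup hBmeas
      have : ℙ (limsup B atTop)ᶜ = 0 := (prob_compl_eq_zero_iff hms).2 hBC
      rw [measure_eq_zero_iff_ae_notMem] at this
      filter_upwards [this] with ω hω
      simpa using hω
    filter_upwards [hae] with ω hω
    rw [mem_limsup_iff_frequently_mem] at hω
    refine le_of_forall_lt_imp_le_of_dense fun a ha => ?_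
    have htend : Tendsto (fun k : ℕ => (ENNReal.ofReal c) ^ ((1 : ℝ) / k)) atTop (𝓝 1) := by
      have h1 : Tendsto (fun k : ℕ => c ^ ((1 : ℝ) / k)) atTop (𝓝 1) := by
        have h2 := (Real.continuousAt_const_rpow (b := (0:ℝ)) hc.ne').tendsto.comp
          tendsto_one_div_atTop_nhds_zero_nat
        simpa [Real.rpow_zero, Function.comp_def] using h2
      have h3 := (ENNReal.continuous_ofReal.continuousAt (x := (1:ℝ))).tendsto.comp h1
      simp only [Function.comp_def, ENNReal.ofReal_one] at h3
      refine h3.congr fun k => ?_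
      exact (ENNReal.ofReal_rpow_of_pos hc).symm
    have hev : ∀ᶠ k : ℕ in atTop, a ≤ (ENNReal.ofReal c) ^ ((1 : ℝ) / k) :=
      htend.eventually (eventually_ge_nhds ha)
    refine le_limsup_of_frequently_le' ((hω.and_eventually hev).mono fun k hk => ?_)
    refine hk.2.trans ?_
    rw [← ENNReal.ofReal_coe_nnreal, coe_nnnorm]
    exact ENNReal.rpow_le_rpow (ENNReal.ofReal_le_ofReal hk.1.le) (by positivity)
  have hfinal : ∀ᵐ ω ∂ℙ,
      limsup (fun k : ℕ => (‖ξ k ω‖₊ : ENNReal) ^ ((1 : ℝ) / k)) atTop = 1 := by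
    filter_upwards [upper, lower] with ω h1 h2
    exact le_antisymm h1 h2
  have heq : {ω | limsup (fun k : ℕ => (‖ξ k ω‖₊ : ENNReal) ^ ((1 : ℝ) / k)) atTop = 1}
      =ᵐ[ℙ] (Set.univ : Set Ω) := eventuallyEq_univ.2 hfinal
  rw [measure_congr heq, measure_univ]
end

section
/- Let ξ₀,...,ξₙ be complex numbers with ξ₀ ≠ 0 and such that |ξₙ|^{1/n} > max_{1≤i≤n−1} |ξᵢ|^{1/i}, |ξₙ|^{1/n} > 3/ε, and |ξ₀| < 2^{n−1} for some ε > 0. Then every root z of the polynomial G(z) = ∑_{k=0}^n ξₖ z^k satisfies |z| < ε. -/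
lemma geom_bound_aux (t : ℝ) (ht : 3 ≤ t) (m : ℕ) :
    ∑ k ∈ Finset.range m, t ^ k ≤ t ^ m / 2 := by
  induction m with
  | zero => norm_num
  | succ m ih =>
    have ht0 : (0:ℝ) ≤ t := by linarith
    rw [Finset.sum_range_succ, pow_succ]
    have h3 : t ^ m * 3 ≤ t ^ m * t :=
      mul_le_mul_of_nonneg_left ht (pow_nonneg ht0 m)
    linarith

theorem all_roots_small (n : ℕ) (hn : 2 ≤ n) (ξ : ℕ → ℂ) (h0 : ξ 0 ≠ 0) (ε : ℝ) (hε : 0 < ε)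
    (hmax : ∀ i : ℕ, 1 ≤ i → i ≤ n - 1 →
      ‖ξ i‖ ^ ((1 : ℝ) / i) < ‖ξ n‖ ^ ((1 : ℝ) / n))
    (hbig : 3 / ε < ‖ξ n‖ ^ ((1 : ℝ) / n))
    (hsmall : ‖ξ 0‖ < 2 ^ (n - 1)) :
    ∀ z : ℂ, (∑ k ∈ Finset.range (n + 1), ξ k * z ^ k) = 0 → ‖z‖ < ε := by
  intro z hz
  by_contra hlt
  push_neg at hlt
  set R := ‖ξ n‖ ^ ((1 : ℝ) / n) with hRdef
  have hn0 : n ≠ 0 := by omega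
  have hR0 : 0 < R := lt_trans (div_pos (by norm_num) hε) hbig
  have hz0 : 0 < ‖z‖ := lt_of_lt_of_le hε hlt
  set t := R * ‖z‖ with htdef
  have ht3 : 3 < t := by
    have h := mul_lt_mul hbig hlt hε (le_of_lt hR0)
    rwa [div_mul_cancel₀ _ (ne_of_gt hε)] at h
  have ht0 : (0:ℝ) ≤ t := by linarith
  have hRn : R ^ n = ‖ξ n‖ := by
    rw [hRdef, one_div, Real.rpow_inv_natCast_pow (norm_nonneg _) hn0]
  -- per-term bound for 1 ≤ i ≤ n-1
  have hterm : ∀ i, 1 ≤ i → i ≤ n - 1 → ‖ξ i‖ < R ^ i := by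
    intro i hi1 hi2
    have h := hmax i hi1 hi2
    have hi0 : i ≠ 0 := by omega
    have := pow_lt_pow_left₀ h (Real.rpow_nonneg (norm_nonneg _) _) hi0
    rwa [one_div, Real.rpow_inv_natCast_pow (norm_nonneg _) hi0] at this
  -- rearrange the root equation
  rw [Finset.sum_range_succ, add_eq_zero_iff_eq_neg] at hz
  have hz' : ξ n * z ^ n = -∑ k ∈ Finset.range n, ξ k * z ^ k := by
    rw [← neg_eq_iff_eq_neg] at hz; linear_combination -hz
  have hLHS : ‖ξ n * z ^ n‖ = t ^ n := by
    rw [norm_mul, norm_pow, ← hRn, htdef, mul_pow]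
  obtain ⟨m, rfl⟩ : ∃ m, n = m + 1 := ⟨n - 1, by omega⟩
  have hbound : ‖ξ (m+1) * z ^ (m+1)‖ ≤
      ∑ k ∈ Finset.range (m+1), ‖ξ k‖ * ‖z‖ ^ k := by
    rw [hz', norm_neg]
    refine le_trans (norm_sum_le _ _) (le_of_eq ?_)
    simp [norm_mul, norm_pow]
  -- bound the sum: peel off the k = 0 term
  rw [Finset.sum_range_succ'] at hbound
  have hsum : ∑ k ∈ Finset.range m, ‖ξ (k+1)‖ * ‖z‖ ^ (k+1)
      ≤ ∑ k ∈ Finset.range m, t ^ (k+1) := by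
    apply Finset.sum_le_sum
    intro k hk
    have hk' := hterm (k+1) (by omega) (by simp at hk; omega)
    have : ‖ξ (k+1)‖ * ‖z‖ ^ (k+1)
        ≤ R ^ (k+1) * ‖z‖ ^ (k+1) :=
      mul_le_mul_of_nonneg_right (le_of_lt hk') (pow_nonneg (le_of_lt hz0) _)
    rwa [← mul_pow] at this
  have hgeom : ∑ k ∈ Finset.range m, t ^ (k+1) ≤ t ^ (m+1) / 2 - 1 := by
    have h := geom_bound_aux t (le_of_lt ht3) (m+1)
    rw [Finset.sum_range_succ'] at h
    simp only [pow_zero] at h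
    linarith
  have h2n : (2:ℝ) ^ (m + 1 - 1) ≤ t ^ (m+1) / 2 := by
    have h2t : (2:ℝ) ^ (m+1) ≤ t ^ (m+1) :=
      pow_le_pow_left₀ (by norm_num) (by linarith) _
    have : (2:ℝ) ^ (m + 1 - 1) * 2 = 2 ^ (m+1) := by
      rw [← pow_succ]
      congr 1
    linarith
  -- final contradiction
  have hzz : ‖z‖ ^ 0 = 1 := pow_zero _
  rw [hzz, mul_one] at hbound
  have : t ^ (m+1) < t ^ (m+1) := by
    calc t ^ (m+1) = ‖ξ (m+1) * z ^ (m+1)‖ := hLHS.symm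
      _ ≤ _ := hbound
      _ ≤ (t ^ (m+1) / 2 - 1) + ‖ξ 0‖ := by linarith
      _ < (t ^ (m+1) / 2 - 1) + 2 ^ (m + 1 - 1) := by linarith
      _ ≤ t ^ (m+1) := by linarith
  exact lt_irrefl _ this
end

section
/- Let p(x) be a real polynomial of degree n with p(a) ≠ 0 and p(b) ≠ 0 for some a < b, and for x ∈ ℝ let Z_p(x) denote the number of sign changes in the sequence p(x), p'(x), ..., p^{(n)}(x) (after deleting zero terms). Then the number of real roots of p in (a,b), counted with multiplicity, is at most Z_p(a) − Z_p(b), and the difference between Z_p(a) − Z_p(b) and this number of roots is even. -/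
/-- Number of sign changes in a list of reals, assuming zeros already removed. -/
noncomputable def signChangesAux : List ℝ → ℕ
  | [] => 0
  | [_] => 0
  | a :: b :: t => (if a * b < 0 then 1 else 0) + signChangesAux (b :: t)

/-- Number of sign changes of a finite sequence of reals: delete zero terms,
then count adjacent pairs of opposite signs. -/
noncomputable def signChanges (l : List ℝ) : ℕ :=
  signChangesAux (l.filter (fun x => decide (x ≠ 0)))

/-- `Z_p(x)`: the number of sign changes in the sequence `p(x), p'(x), ..., p⁽ⁿ⁾(x)`. -/
noncomputable def Zp (p : Polynomial ℝ) (x : ℝ) : ℕ :=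
  signChanges ((List.range (p.natDegree + 1)).map
    (fun j => ((Polynomial.derivative)^[j] p).eval x))

namespace BF

/-- first nonzero entry of a list (0 if none) -/
noncomputable def fn (l : List ℝ) : ℝ := (l.filter (fun x => decide (x ≠ 0))).headD 0

/-- number of leading zeros -/
noncomputable def lead0 : List ℝ → ℕ
  | [] => 0
  | a :: t => if a = 0 then lead0 t + 1 else 0

@[simp] lemma fn_nil : fn [] = 0 := rfl

lemma fn_cons_zero (l : List ℝ) : fn (0 :: l) = fn l := by simp [fn]

lemma fn_cons_ne (x : ℝ) (hx : x ≠ 0) (l : List ℝ) : fn (x :: l) = x := by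
  simp [fn, hx]

@[simp] lemma lead0_cons_zero (l : List ℝ) : lead0 (0 :: l) = lead0 l + 1 := by simp [lead0]

lemma lead0_cons_ne (x : ℝ) (hx : x ≠ 0) (l : List ℝ) : lead0 (x :: l) = 0 := by
  simp [lead0, hx]

lemma signChanges_nil : signChanges [] = 0 := rfl

lemma signChanges_cons_zero (l : List ℝ) : signChanges ((0:ℝ) :: l) = signChanges l := by
  simp [signChanges]

lemma signChanges_cons (x : ℝ) (hx : x ≠ 0) (l : List ℝ) :
    signChanges (x :: l) = (if x * fn l < 0 then 1 else 0) + signChanges l := by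
  unfold signChanges fn
  rw [List.filter_cons_of_pos (by simpa using hx)]
  cases h : l.filter (fun x => decide (x ≠ 0)) with
  | nil => simp [signChangesAux, h]
  | cons b t => simp [signChangesAux, h]

lemma ind_congr {x y u v : ℝ} (h1 : x * y > 0) (h2 : u * v > 0) :
    (if x * u < 0 then (1:ℕ) else 0) = if y * v < 0 then 1 else 0 := by
  have key : x * u < 0 ↔ y * v < 0 := by
    constructor <;> intro h <;> nlinarith [mul_pos h1 h2]
  rw [if_congr key rfl rfl]

lemma Acomb : ∀ (V W : List ℝ), V.length = W.length →
    (∀ i, i < V.length → W.getD i 0 * fn (V.drop i) > 0) →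
    signChanges W = signChanges V := by
  intro V
  induction V with
  | nil =>
    intro W hlen _
    cases W with
    | nil => rfl
    | cons w W' => simp at hlen
  | cons v V' ih =>
    intro W hlen hyp
    cases W with
    | nil => simp at hlen
    | cons w W' =>
      have h0 := hyp 0 (by simp)
      simp only [List.getD_cons_zero, List.drop_zero] at h0
      have hw : w ≠ 0 := fun h => by rw [h] at h0; simp at h0
      have hlen' : V'.length = W'.length := by simpa using hlen
      have hyp' : ∀ i, i < V'.length → W'.getD i 0 * fn (V'.drop i) > 0 := by
        intro i hi
        have := hyp (i+1) (by simpa using Nat.succ_lt_succ hi)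
        simpa using this
      have hih := ih W' hlen' hyp'
      have hVW : V' = [] → W' = [] := by
        intro h; subst h; simpa using hlen'.symm
      by_cases hv : v = 0
      · subst hv
        rw [fn_cons_zero] at h0
        rw [signChanges_cons_zero, signChanges_cons w hw, hih]
        have hV'ne : V' ≠ [] := fun h => by subst h; simp at h0
        have hW'ne : W' ≠ [] := fun h => by
          have : V' = [] := by
            cases V' with
            | nil => rfl
            | cons a t => subst h; simp at hlen'
          exact hV'ne this
        obtain ⟨w1, W'', rfl⟩ := List.exists_cons_of_ne_nil hW'ne
        have h1 := hyp' 0 (by cases V' with | nil => exact absurd rfl hV'ne | cons a t => simp)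
        simp only [List.getD_cons_zero, List.drop_zero] at h1
        have hw1 : w1 ≠ 0 := fun h => by rw [h] at h1; simp at h1
        rw [fn_cons_ne w1 hw1]
        have : ¬ (w * w1 < 0) := by nlinarith [mul_pos h0 h1, sq_nonneg (fn V')]
        simp [this]
      · rw [fn_cons_ne v hv] at h0
        rw [signChanges_cons w hw, signChanges_cons v hv, hih]
        congr 1
        cases W' with
        | nil =>
          have hV : V' = [] := by
            cases V' with
            | nil => rfl
            | cons a t => simp at hlen'
          subst hV; simp
        | cons w1 W'' =>
          have hV'ne : V' ≠ [] := by
            intro h; subst h; simp at hlen'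
          have h1 := hyp' 0 (by cases V' with | nil => exact absurd rfl hV'ne | cons a t => simp)
          simp only [List.getD_cons_zero, List.drop_zero] at h1
          have hw1 : w1 ≠ 0 := fun h => by rw [h] at h1; simp at h1
          rw [fn_cons_ne w1 hw1]
          exact ind_congr (mul_comm w v ▸ h0) h1

lemma Bcomb : ∀ (V W : List ℝ), V.length = W.length →
    (∀ i, i < V.length →
      ((-1:ℝ)^(lead0 (V.drop i)) * W.getD i 0) * fn (V.drop i) > 0) →
    ∃ d, signChanges W = signChanges V + lead0 V + 2 * d := by
  intro V
  induction V with
  | nil =>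
    intro W hlen _
    cases W with
    | nil => exact ⟨0, rfl⟩
    | cons w W' => simp at hlen
  | cons v V' ih =>
    intro W hlen hyp
    cases W with
    | nil => simp at hlen
    | cons w W' =>
      have h0 := hyp 0 (by simp)
      simp only [List.getD_cons_zero, List.drop_zero] at h0
      have hw : w ≠ 0 := fun h => by rw [h] at h0; simp at h0
      have hlen' : V'.length = W'.length := by simpa using hlen
      have hyp' : ∀ i, i < V'.length →
          ((-1:ℝ)^(lead0 (V'.drop i)) * W'.getD i 0) * fn (V'.drop i) > 0 := by
        intro i hi
        have := hyp (i+1) (by simpa using Nat.succ_lt_succ hi)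
        simpa using this
      obtain ⟨d, hd⟩ := ih W' hlen' hyp'
      by_cases hv : v = 0
      · -- leading zero case
        subst hv
        rw [fn_cons_zero, lead0_cons_zero, pow_succ] at h0
        have hV'ne : V' ≠ [] := fun h => by subst h; simp at h0
        have hW'ne : W' ≠ [] := fun h => by
          have : V' = [] := by
            cases V' with
            | nil => rfl
            | cons a t => subst h; simp at hlen'
          exact hV'ne this
        obtain ⟨w1, W'', rfl⟩ := List.exists_cons_of_ne_nil hW'ne
        have h1 := hyp' 0 (by cases V' with | nil => exact absurd rfl hV'ne | cons a t => simp)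
        simp only [List.getD_cons_zero, List.drop_zero] at h1
        have hw1 : w1 ≠ 0 := fun h => by rw [h] at h1; simp at h1
        have hind : w * w1 < 0 := by
          nlinarith [mul_pos h0 h1, sq_nonneg ((-1:ℝ)^(lead0 V') * fn V'), mul_self_nonneg (w*w1)]
        rw [signChanges_cons w hw, fn_cons_ne w1 hw1, if_pos hind,
          signChanges_cons_zero, lead0_cons_zero, hd]
        exact ⟨d, by omega⟩
      · -- nonzero head
        rw [fn_cons_ne v hv, lead0_cons_ne v hv, pow_zero, one_mul] at h0
        rw [lead0_cons_ne v hv, signChanges_cons w hw, signChanges_cons v hv]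
        cases W' with
        | nil =>
          have hV : V' = [] := by
            cases V' with
            | nil => rfl
            | cons a t => simp at hlen'
          subst hV
          exact ⟨0, by simp [signChanges_nil, lead0]⟩
        | cons w1 W'' =>
          have hV'ne : V' ≠ [] := by intro h; subst h; simp at hlen'
          have h1 := hyp' 0 (by cases V' with | nil => exact absurd rfl hV'ne | cons a t => simp)
          simp only [List.getD_cons_zero, List.drop_zero] at h1
          have hw1 : w1 ≠ 0 := fun h => by rw [h] at h1; simp at h1
          have hfn : fn V' ≠ 0 := fun h => by rw [h] at h1; simp at h1
          rw [fn_cons_ne w1 hw1, hd]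
          -- goal: ∃ d', ind(w*w1) + (sc V' + lead0 V' + 2d) = ind(v * fn V') + sc V' + 0 + 2 d'
          rcases Nat.even_or_odd (lead0 V') with he | ho
          · -- (-1)^lead0 = 1 : w1 and fn V' same sign
            have hpow : ((-1:ℝ))^(lead0 V') = 1 := he.neg_one_pow
            rw [hpow, one_mul] at h1
            have hindeq : (if w * w1 < 0 then (1:ℕ) else 0) = if v * fn V' < 0 then 1 else 0 :=
              ind_congr (mul_comm w v ▸ h0) h1
            obtain ⟨e, he'⟩ := he
            exact ⟨d + e, by rw [hindeq]; omega⟩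
          · -- odd: w1 and fn V' opposite sign: indicators flip
            have hpow : ((-1:ℝ))^(lead0 V') = -1 := ho.neg_one_pow
            rw [hpow] at h1
            have h1' : (-w1) * fn V' > 0 := by nlinarith
            have hindeq : (if w * (-w1) < 0 then (1:ℕ) else 0) = if v * fn V' < 0 then 1 else 0 :=
              ind_congr (mul_comm w v ▸ h0) h1'
            obtain ⟨e, he'⟩ := ho
            -- ind(w*w1) = 1 - ind(w*(-w1))
            have hflip : (if w * w1 < 0 then (1:ℕ) else 0) + (if w * (-w1) < 0 then (1:ℕ) else 0) = 1 := by
              have hww1 : w * w1 ≠ 0 := mul_ne_zero hw hw1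
              rcases lt_or_gt_of_ne hww1 with h | h
              · rw [if_pos h, if_neg (by nlinarith)]
              · rw [if_neg (by nlinarith), if_pos (by nlinarith)]
            refine ⟨d + e + (1 - (if v * fn V' < 0 then 1 else 0)), ?_⟩
            rw [← hindeq]
            omega
end BF


namespace BF
open Polynomial Filter Set

lemma STR (c : ℝ) : ∀ (i m : ℕ) (r : ℝ[X]), i ≤ m →
    ∃ s : ℝ[X], Polynomial.derivative^[i] ((X - C c)^m * r) = (X - C c)^(m-i) * s ∧
      s.eval c = (m.descFactorial i) * r.eval c := by
  intro i
  induction i with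
  | zero => intro m r _; exact ⟨r, by simp, by simp⟩
  | succ i ih =>
    intro m r him
    obtain ⟨s, hs, hev⟩ := ih m r (Nat.le_of_succ_le him)
    obtain ⟨k, hk⟩ : ∃ k, m - i = k + 1 := ⟨m - (i+1), by omega⟩
    have hk' : m - (i+1) = k := by omega
    rw [hk] at hs
    refine ⟨(C ((k+1 : ℕ) : ℝ)) * s + (X - C c) * Polynomial.derivative s, ?_, ?_⟩
    · rw [Function.iterate_succ_apply', hs, hk']
      rw [derivative_mul, derivative_pow, derivative_sub, derivative_X, derivative_C,
        sub_zero, mul_one]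
      simp only [Nat.add_sub_cancel, Polynomial.C_eq_natCast]
      ring
    · have hdf : m.descFactorial (i+1) = (k+1) * m.descFactorial i := by
        rw [Nat.descFactorial_succ, hk]
      rw [hdf]
      simp only [eval_add, eval_mul, eval_C, eval_sub, eval_X, sub_self, zero_mul, add_zero, hev]
      push_cast
      ring

/-- Local structure of a nonzero polynomial near a point. -/
lemma local_struct (q : ℝ[X]) (hq : q ≠ 0) (c : ℝ) :
    (∀ i < q.rootMultiplicity c, (Polynomial.derivative^[i] q).eval c = 0) ∧
    (Polynomial.derivative^[q.rootMultiplicity c] q).eval c ≠ 0 ∧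
    (∀ᶠ x in nhdsWithin c (Set.Ioi c),
      q.eval x * (Polynomial.derivative^[q.rootMultiplicity c] q).eval c > 0) ∧
    (∀ᶠ x in nhdsWithin c (Set.Iio c),
      ((-1:ℝ)^(q.rootMultiplicity c) * q.eval x) *
        (Polynomial.derivative^[q.rootMultiplicity c] q).eval c > 0) := by
  set m := q.rootMultiplicity c with hm
  set r := q /ₘ (X - C c) ^ m with hr
  have hfac : (X - C c) ^ m * r = q := q.pow_mul_divByMonic_rootMultiplicity_eq c
  have hrc : r.eval c ≠ 0 := eval_divByMonic_pow_rootMultiplicity_ne_zero c hq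
  -- value of the m-th derivative at c
  obtain ⟨s, hs, hsev⟩ := STR c m m r le_rfl
  rw [hfac] at hs
  have hDval : (Polynomial.derivative^[m] q).eval c = (m.factorial : ℝ) * r.eval c := by
    rw [hs]
    simp [Nat.descFactorial_self, hsev]
  have hD0 : (Polynomial.derivative^[m] q).eval c ≠ 0 := by
    rw [hDval]
    exact mul_ne_zero (Nat.cast_ne_zero.mpr m.factorial_ne_zero) hrc
  have hzero : ∀ i < m, (Polynomial.derivative^[i] q).eval c = 0 := by
    intro i hi
    obtain ⟨s', hs', _⟩ := STR c i m r hi.le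
    rw [hfac] at hs'
    rw [hs']
    have : m - i ≠ 0 := by omega
    simp [eval_mul, eval_pow, zero_pow this]
  refine ⟨hzero, hD0, ?_, ?_⟩
  · -- right
    have hev : ∀ᶠ x in nhdsWithin c (Set.Ioi c), r.eval x * r.eval c > 0 := by
      have hcont : ContinuousAt (fun x => r.eval x * r.eval c) c :=
        (Polynomial.continuous r).continuousAt.mul continuousAt_const
      have hpos : (0:ℝ) < r.eval c * r.eval c := mul_self_pos.mpr hrc
      exact (hcont.eventually (eventually_gt_nhds hpos)).filter_mono nhdsWithin_le_nhds
    filter_upwards [hev, self_mem_nhdsWithin] with x hx hx'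
    have hxc : c < x := hx'
    have hqx : q.eval x = (x - c)^m * r.eval x := by
      rw [← hfac]; simp [eval_mul, eval_pow]
    have hpow : (0:ℝ) < (x - c)^m := pow_pos (by linarith) m
    have hfc : (0:ℝ) < (m.factorial : ℝ) := by positivity
    rw [hqx, hDval]
    have key : (0:ℝ) < ((x - c)^m * (r.eval x * r.eval c)) * (m.factorial : ℝ) :=
      mul_pos (mul_pos hpow hx) hfc
    nlinarith [key]
  · -- left
    have hev : ∀ᶠ x in nhdsWithin c (Set.Iio c), r.eval x * r.eval c > 0 := by
      have hcont : ContinuousAt (fun x => r.eval x * r.eval c) c :=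
        (Polynomial.continuous r).continuousAt.mul continuousAt_const
      have hpos : (0:ℝ) < r.eval c * r.eval c := mul_self_pos.mpr hrc
      exact (hcont.eventually (eventually_gt_nhds hpos)).filter_mono nhdsWithin_le_nhds
    filter_upwards [hev, self_mem_nhdsWithin] with x hx hx'
    have hxc : x < c := hx'
    have hqx : q.eval x = (x - c)^m * r.eval x := by
      rw [← hfac]; simp [eval_mul, eval_pow]
    have hneg : (-1:ℝ)^m * (x - c)^m = (c - x)^m := by
      rw [← mul_pow]; ring_nf
    have hpow : (0:ℝ) < (c - x)^m := pow_pos (by linarith) m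
    have hfc : (0:ℝ) < (m.factorial : ℝ) := by positivity
    rw [hqx, hDval]
    have key : (0:ℝ) < ((c - x)^m * (r.eval x * r.eval c)) * (m.factorial : ℝ) :=
      mul_pos (mul_pos hpow hx) hfc
    nlinarith [key, hneg]
end BF

namespace BF
open Polynomial Filter Set

lemma getD_drop (l : List ℝ) : ∀ (k j : ℕ), (l.drop k).getD j 0 = l.getD (k + j) 0 := by
  induction l with
  | nil => intro k j; simp
  | cons x t ih =>
    intro k j
    cases k with
    | zero => simp
    | succ k =>
      have : k + 1 + j = (k + j) + 1 := by omega
      rw [this]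
      simpa using ih k j

lemma fn_lead0_of : ∀ (m : ℕ) (l : List ℝ), m < l.length → (∀ i < m, l.getD i 0 = 0) →
    l.getD m 0 ≠ 0 → fn l = l.getD m 0 ∧ lead0 l = m := by
  intro m
  induction m with
  | zero =>
    intro l hlen _ hne
    cases l with
    | nil => simp at hlen
    | cons x t =>
      simp only [List.getD_cons_zero] at hne ⊢
      exact ⟨fn_cons_ne x hne t, lead0_cons_ne x hne t⟩
  | succ m ih =>
    intro l hlen h0 hne
    cases l with
    | nil => simp at hlen
    | cons x t =>
      have hx : x = 0 := by simpa using h0 0 (Nat.succ_pos m)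
      subst hx
      have ht := ih t (by simpa using hlen)
        (fun i hi => by simpa using h0 (i+1) (Nat.succ_lt_succ hi))
        (by simpa using hne)
      simp only [List.getD_cons_succ] at *
      exact ⟨by rw [fn_cons_zero]; exact ht.1, by rw [lead0_cons_zero, ht.2]⟩

/-- the list of derivative values -/
noncomputable def VL (p : ℝ[X]) (x : ℝ) : List ℝ :=
  (List.range (p.natDegree + 1)).map (fun j => ((Polynomial.derivative)^[j] p).eval x)

lemma Zp_eq (p : ℝ[X]) (x : ℝ) : Zp p x = signChanges (VL p x) := rfl

lemma length_VL (p : ℝ[X]) (x : ℝ) : (VL p x).length = p.natDegree + 1 := by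
  simp [VL]

lemma getD_VL (p : ℝ[X]) (x : ℝ) (k : ℕ) (hk : k ≤ p.natDegree) :
    (VL p x).getD k 0 = ((Polynomial.derivative)^[k] p).eval x := by
  rw [List.getD_eq_getElem _ _ (by simpa [length_VL] using Nat.lt_succ_of_le hk)]
  simp [VL]

lemma q_ne_zero {p : ℝ[X]} (hp : p ≠ 0) {k : ℕ} (hk : k ≤ p.natDegree) :
    (Polynomial.derivative)^[k] p ≠ 0 := by
  intro h
  have hc := Polynomial.coeff_iterate_derivative p (k := k) (p.natDegree - k)
  rw [h] at hc
  have hnk : p.natDegree - k + k = p.natDegree := by omega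
  rw [hnk] at hc
  simp only [Polynomial.coeff_zero] at hc
  have h1 : (p.natDegree.descFactorial k) ≠ 0 := fun h => absurd (Nat.descFactorial_eq_zero_iff_lt.mp h) (by omega)
  have h2 : p.coeff p.natDegree ≠ 0 := by
    rw [Polynomial.coeff_natDegree]
    exact Polynomial.leadingCoeff_ne_zero.mpr hp
  rw [nsmul_eq_mul] at hc
  exact (mul_ne_zero (Nat.cast_ne_zero.mpr h1) h2) hc.symm

lemma mult_le {p : ℝ[X]} (hp : p ≠ 0) {k : ℕ} (hk : k ≤ p.natDegree) (c : ℝ) :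
    k + ((Polynomial.derivative)^[k] p).rootMultiplicity c ≤ p.natDegree := by
  set q := (Polynomial.derivative)^[k] p with hq
  have hqne : q ≠ 0 := q_ne_zero hp hk
  have h1 : ((X - C c) ^ (q.rootMultiplicity c)).natDegree ≤ q.natDegree :=
    Polynomial.natDegree_le_of_dvd (q.pow_rootMultiplicity_dvd c) hqne
  rw [Polynomial.natDegree_pow, Polynomial.natDegree_X_sub_C, mul_one] at h1
  have h2 := Polynomial.natDegree_iterate_derivative p k
  rw [← hq] at h2
  omega

lemma fn_lead0_drop {p : ℝ[X]} (hp : p ≠ 0) (c : ℝ) {k : ℕ} (hk : k ≤ p.natDegree) :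
    fn ((VL p c).drop k) =
      ((Polynomial.derivative)^[k + ((Polynomial.derivative)^[k] p).rootMultiplicity c] p).eval c
    ∧ lead0 ((VL p c).drop k) = ((Polynomial.derivative)^[k] p).rootMultiplicity c := by
  set m := ((Polynomial.derivative)^[k] p).rootMultiplicity c with hmdef
  have hkm : k + m ≤ p.natDegree := mult_le hp hk c
  have hiter : ∀ i, (Polynomial.derivative)^[k + i] p =
      (Polynomial.derivative)^[i] ((Polynomial.derivative)^[k] p) := by
    intro i
    rw [add_comm, Function.iterate_add_apply]
  have hls := local_struct ((Polynomial.derivative)^[k] p) (q_ne_zero hp hk) c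
  have hgetD : ((VL p c).drop k).getD m 0 = ((Polynomial.derivative)^[k + m] p).eval c := by
    rw [getD_drop, getD_VL p c (k+m) (by omega)]
  have H := fn_lead0_of m ((VL p c).drop k)
    (by rw [List.length_drop, length_VL]; omega)
    (fun i hi => by
      rw [getD_drop, getD_VL p c (k+i) (by omega), hiter i]
      exact hls.1 i hi)
    (by rw [hgetD, hiter m]; exact hls.2.1)
  exact ⟨by rw [H.1, hgetD], H.2⟩

lemma sign_const (f : ℝ[X]) (u v : ℝ) (huv : u ≤ v)
    (h : ∀ y ∈ Icc u v, f.eval y ≠ 0) : f.eval v * f.eval u > 0 := by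
  by_contra hc
  push_neg at hc
  have hu := h u ⟨le_rfl, huv⟩
  have hv := h v ⟨huv, le_rfl⟩
  have hlt : f.eval v * f.eval u < 0 := lt_of_le_of_ne hc (mul_ne_zero hv hu)
  rcases mul_neg_iff.mp hlt with ⟨h1, h2⟩ | ⟨h1, h2⟩
  · -- f v > 0, f u < 0
    have : (0:ℝ) ∈ Icc (f.eval u) (f.eval v) := ⟨h2.le, h1.le⟩
    obtain ⟨y, hy, hy0⟩ := intermediate_value_Icc huv (f.continuous.continuousOn) this
    exact h y hy hy0
  · have : (0:ℝ) ∈ Icc (f.eval v) (f.eval u) := ⟨h1.le, h2.le⟩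
    obtain ⟨y, hy, hy0⟩ := intermediate_value_Icc' huv (f.continuous.continuousOn) this
    exact h y hy hy0

/-- Zp is equal at two points if no derivative vanishes in between -/
lemma constZ {p : ℝ[X]} (hp : p ≠ 0) {u v : ℝ} (huv : u ≤ v)
    (hno : ∀ k ≤ p.natDegree, ∀ y ∈ Icc u v, ((Polynomial.derivative)^[k] p).eval y ≠ 0) :
    Zp p u = Zp p v := by
  rw [Zp_eq, Zp_eq]
  refine (Acomb (VL p u) (VL p v) (by rw [length_VL, length_VL]) ?_).symm
  intro i hi
  rw [length_VL] at hi
  have hin : i ≤ p.natDegree := by omega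
  have hm0 : ((Polynomial.derivative)^[i] p).rootMultiplicity u = 0 := by
    rw [Polynomial.rootMultiplicity_eq_zero_iff]
    intro hroot
    exact absurd hroot (hno i hin u ⟨le_rfl, huv⟩)
  have hfn := (fn_lead0_drop hp u hin).1
  rw [hm0, add_zero] at hfn
  rw [hfn, getD_VL p v i hin]
  exact sign_const _ u v huv (hno i hin)

/-- right constancy of Zp -/
lemma rightA {p : ℝ[X]} (hp : p ≠ 0) (c : ℝ) :
    ∀ᶠ x in nhdsWithin c (Set.Ioi c), Zp p x = Zp p c := by
  have hall : ∀ᶠ x in nhdsWithin c (Set.Ioi c), ∀ k ∈ Finset.range (p.natDegree + 1),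
      ((Polynomial.derivative)^[k] p).eval x *
        ((Polynomial.derivative)^[k + ((Polynomial.derivative)^[k] p).rootMultiplicity c] p).eval c
        > 0 := by
    rw [Filter.eventually_all_finset]
    intro k hk
    rw [Finset.mem_range] at hk
    have hkn : k ≤ p.natDegree := by omega
    have hls := (local_struct ((Polynomial.derivative)^[k] p) (q_ne_zero hp hkn) c).2.2.1
    have hiter : (Polynomial.derivative)^[k + ((Polynomial.derivative)^[k] p).rootMultiplicity c] p
        = (Polynomial.derivative)^[((Polynomial.derivative)^[k] p).rootMultiplicity c]
            ((Polynomial.derivative)^[k] p) := by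
      rw [add_comm, Function.iterate_add_apply]
    rw [hiter]
    exact hls
  filter_upwards [hall] with x hx
  rw [Zp_eq, Zp_eq]
  apply Acomb (VL p c) (VL p x) (by rw [length_VL, length_VL])
  intro i hi
  rw [length_VL] at hi
  have hin : i ≤ p.natDegree := by omega
  rw [(fn_lead0_drop hp c hin).1, getD_VL p x i hin]
  exact hx i (Finset.mem_range.mpr hi)

/-- left jump of Zp -/
lemma leftB {p : ℝ[X]} (hp : p ≠ 0) (c : ℝ) :
    ∀ᶠ x in nhdsWithin c (Set.Iio c),
      ∃ d, Zp p x = Zp p c + p.rootMultiplicity c + 2 * d := by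
  have hall : ∀ᶠ x in nhdsWithin c (Set.Iio c), ∀ k ∈ Finset.range (p.natDegree + 1),
      ((-1:ℝ)^(((Polynomial.derivative)^[k] p).rootMultiplicity c) *
        ((Polynomial.derivative)^[k] p).eval x) *
        ((Polynomial.derivative)^[k + ((Polynomial.derivative)^[k] p).rootMultiplicity c] p).eval c
        > 0 := by
    rw [Filter.eventually_all_finset]
    intro k hk
    rw [Finset.mem_range] at hk
    have hkn : k ≤ p.natDegree := by omega
    have hls := (local_struct ((Polynomial.derivative)^[k] p) (q_ne_zero hp hkn) c).2.2.2
    have hiter : (Polynomial.derivative)^[k + ((Polynomial.derivative)^[k] p).rootMultiplicity c] p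
        = (Polynomial.derivative)^[((Polynomial.derivative)^[k] p).rootMultiplicity c]
            ((Polynomial.derivative)^[k] p) := by
      rw [add_comm, Function.iterate_add_apply]
    rw [hiter]
    exact hls
  filter_upwards [hall] with x hx
  have hlead : lead0 (VL p c) = p.rootMultiplicity c := by
    have := (fn_lead0_drop hp c (Nat.zero_le p.natDegree)).2
    simpa using this
  rw [Zp_eq, Zp_eq, ← hlead]
  apply Bcomb (VL p c) (VL p x) (by rw [length_VL, length_VL])
  intro i hi
  rw [length_VL] at hi
  have hin : i ≤ p.natDegree := by omega
  rw [(fn_lead0_drop hp c hin).1, (fn_lead0_drop hp c hin).2, getD_VL p x i hin]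
  exact hx i (Finset.mem_range.mpr hi)

end BF

namespace BF
open Polynomial Filter Set
open scoped Classical

noncomputable def Dfin (p : ℝ[X]) : Finset ℝ :=
  (Finset.range (p.natDegree + 1)).biUnion
    fun k => ((Polynomial.derivative)^[k] p).roots.toFinset

lemma root_mem_Dfin {p : ℝ[X]} (hp : p ≠ 0) {k : ℕ} (hk : k ≤ p.natDegree) {x : ℝ}
    (hx : ((Polynomial.derivative)^[k] p).eval x = 0) : x ∈ Dfin p :=
  Finset.mem_biUnion.mpr ⟨k, Finset.mem_range.mpr (Nat.lt_succ_of_le hk),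
    Multiset.mem_toFinset.mpr ((Polynomial.mem_roots (q_ne_zero hp hk)).mpr hx)⟩

lemma root_mem_Dfin' {p : ℝ[X]} (hp : p ≠ 0) {x : ℝ} (hx : p.eval x = 0) : x ∈ Dfin p :=
  root_mem_Dfin hp (Nat.zero_le _) (by simpa using hx)

lemma main_empty {p : ℝ[X]} (hp : p ≠ 0) {a b : ℝ} (hab : a < b)
    (hemp : ∀ x ∈ Set.Ioc a b, x ∉ Dfin p) :
    Zp p a = Zp p b ∧ p.roots.filter (fun r => a < r ∧ r ≤ b) = 0 := by
  have hq : ∀ k ≤ p.natDegree, ∀ y ∈ Set.Ioc a b, ((Polynomial.derivative)^[k] p).eval y ≠ 0 := by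
    intro k hk y hy h0
    exact hemp y hy (root_mem_Dfin hp hk h0)
  have hioo : ∀ᶠ x in nhdsWithin a (Set.Ioi a), x ∈ Set.Ioo a b :=
    Filter.eventually_mem_set.mpr (Ioo_mem_nhdsGT_of_mem ⟨le_rfl, hab⟩)
  obtain ⟨x, hxZ, hxI⟩ := ((rightA hp a).and hioo).exists
  constructor
  · rw [← hxZ]
    exact constZ hp hxI.2.le
      (fun k hk y hy => hq k hk y ⟨lt_of_lt_of_le hxI.1 hy.1, hy.2⟩)
  · rw [Multiset.filter_eq_nil]
    intro r hr hcond
    exact hemp r ⟨hcond.1, hcond.2⟩ (root_mem_Dfin' hp (Polynomial.isRoot_of_mem_roots hr))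

lemma main {p : ℝ[X]} (hp : p ≠ 0) : ∀ (N : ℕ) (a b : ℝ), a < b →
    p.eval a ≠ 0 → p.eval b ≠ 0 →
    ((Dfin p).filter (· ∈ Set.Ioc a b)).card ≤ N →
    ∃ d, Zp p a = Zp p b + Multiset.card (p.roots.filter (fun r => a < r ∧ r ≤ b)) + 2 * d := by
  intro N
  induction N with
  | zero =>
    intro a b hab hpa hpb hcard
    have hemp : ∀ x ∈ Set.Ioc a b, x ∉ Dfin p := by
      intro x hx hxD
      have : x ∈ (Dfin p).filter (· ∈ Set.Ioc a b) := Finset.mem_filter.mpr ⟨hxD, hx⟩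
      have := Finset.card_pos.mpr ⟨x, this⟩
      omega
    obtain ⟨hZ, hR⟩ := main_empty hp hab hemp
    exact ⟨0, by rw [hZ, hR]; simp⟩
  | succ N ih =>
    intro a b hab hpa hpb hcard
    by_cases hS : ((Dfin p).filter (· ∈ Set.Ioc a b)).Nonempty
    · set S := (Dfin p).filter (· ∈ Set.Ioc a b) with hSdef
      set c := S.max' hS with hcdef
      have hcS : c ∈ S := S.max'_mem hS
      obtain ⟨hcD, hac, hcb⟩ : c ∈ Dfin p ∧ a < c ∧ c ≤ b := by
        have := Finset.mem_filter.mp hcS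
        exact ⟨this.1, this.2.1, this.2.2⟩
      have hmax : ∀ y ∈ S, y ≤ c := fun y hy => S.le_max' y hy
      -- (α) Zp p c = Zp p b
      have hZcb : Zp p c = Zp p b := by
        rcases eq_or_lt_of_le hcb with hceq | hclt
        · rw [hceq]
        · have hioo : ∀ᶠ x in nhdsWithin c (Set.Ioi c), x ∈ Set.Ioo c b :=
            Filter.eventually_mem_set.mpr (Ioo_mem_nhdsGT_of_mem ⟨le_rfl, hclt⟩)
          obtain ⟨x, hxZ, hxI⟩ := ((rightA hp c).and hioo).exists
          rw [← hxZ]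
          apply constZ hp hxI.2.le
          intro k hk y hy h0
          have hyS : y ∈ S := Finset.mem_filter.mpr ⟨root_mem_Dfin hp hk h0,
            ⟨lt_trans hac (lt_of_lt_of_le hxI.1 hy.1), hy.2⟩⟩
          have := hmax y hyS
          have : c < y := lt_of_lt_of_le hxI.1 hy.1
          linarith [hmax y hyS]
      -- M below c
      set s := (Dfin p).filter (· ∈ Set.Ioo a c) with hsdef
      obtain ⟨M, hMa, hMc, hMs⟩ : ∃ M, a ≤ M ∧ M < c ∧ ∀ y ∈ s, y ≤ M := by
        by_cases hs : s.Nonempty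
        · refine ⟨max a (s.max' hs), le_max_left _ _, ?_, ?_⟩
          · apply max_lt hac
            obtain ⟨hd1, hd2⟩ := Finset.mem_filter.mp (s.max'_mem hs)
            exact hd2.2
          · intro y hy
            exact le_max_of_le_right (s.le_max' y hy)
        · exact ⟨a, le_rfl, hac, fun y hy => absurd ⟨y, hy⟩ hs⟩
      -- pick u
      have hioo : ∀ᶠ x in nhdsWithin c (Set.Iio c), x ∈ Set.Ioo M c :=
        Filter.eventually_mem_set.mpr (Ioo_mem_nhdsLT_of_mem ⟨hMc, le_rfl⟩)
      obtain ⟨u, hud, huI⟩ := ((leftB hp c).and hioo).exists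
      obtain ⟨d₂, hd₂⟩ := hud
      have hau : a < u := lt_of_le_of_lt hMa huI.1
      have huc : u < c := huI.2
      have hpu : p.eval u ≠ 0 := by
        intro h0
        have hus : u ∈ s := Finset.mem_filter.mpr ⟨root_mem_Dfin' hp h0, ⟨hau, huc⟩⟩
        linarith [hMs u hus, huI.1]
      -- IH
      have hsub : (Dfin p).filter (· ∈ Set.Ioc a u) ⊂ S := by
        constructor
        · intro x hx
          obtain ⟨h1, h2⟩ := Finset.mem_filter.mp hx
          exact Finset.mem_filter.mpr ⟨h1, ⟨h2.1, le_trans h2.2 (le_trans huc.le hcb)⟩⟩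
        · intro hsub'
          have := Finset.mem_filter.mp (hsub' hcS)
          linarith [this.2.2]
      have hcard' : ((Dfin p).filter (· ∈ Set.Ioc a u)).card ≤ N := by
        have := Finset.card_lt_card hsub
        omega
      obtain ⟨d₁, hd₁⟩ := ih a u hau hpa hpu hcard'
      -- root count decomposition
      have hsplit : Multiset.card (p.roots.filter (fun r => a < r ∧ r ≤ b)) =
          Multiset.card (p.roots.filter (fun r => a < r ∧ r ≤ u)) + p.rootMultiplicity c := by
        have hdisj : p.roots.filter (fun r => (a < r ∧ r ≤ u) ∧ (u < r ∧ r ≤ b)) = 0 := by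
          rw [Multiset.filter_eq_nil]
          intro r _ h
          linarith [h.1.2, h.2.1]
        have hcover : p.roots.filter (fun r => (a < r ∧ r ≤ u) ∨ (u < r ∧ r ≤ b)) =
            p.roots.filter (fun r => a < r ∧ r ≤ b) := by
          apply Multiset.filter_congr
          intro r _
          constructor
          · rintro (⟨h1, h2⟩ | ⟨h1, h2⟩)
            · exact ⟨h1, le_trans h2 (le_trans huc.le hcb)⟩
            · exact ⟨lt_trans hau h1, h2⟩
          · rintro ⟨h1, h2⟩
            rcases le_or_gt r u with h | h
            · exact Or.inl ⟨h1, h⟩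
            · exact Or.inr ⟨h, h2⟩
        have hsingle : p.roots.filter (fun r => u < r ∧ r ≤ b) =
            p.roots.filter (fun r => c = r) := by
          apply Multiset.filter_congr
          intro r hr
          constructor
          · rintro ⟨h1, h2⟩
            have hrD : r ∈ Dfin p := root_mem_Dfin' hp (Polynomial.isRoot_of_mem_roots hr)
            have hrS : r ∈ S := Finset.mem_filter.mpr ⟨hrD, ⟨lt_trans hau h1, h2⟩⟩
            have hrc : r ≤ c := hmax r hrS
            rcases eq_or_lt_of_le hrc with h | h
            · exact h.symm
            · have hrs : r ∈ s := Finset.mem_filter.mpr ⟨hrD, ⟨lt_trans hau h1, h⟩⟩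
              linarith [hMs r hrs, huI.1]
          · rintro rfl
            exact ⟨huc, hcb⟩
        have hadd := Multiset.filter_add_filter (fun r => a < r ∧ r ≤ u)
          (fun r => u < r ∧ r ≤ b) p.roots
        rw [hdisj, add_zero, hcover] at hadd
        rw [← hadd, Multiset.card_add, hsingle, ← Multiset.count_eq_card_filter_eq,
          Polynomial.count_roots]
      exact ⟨d₁ + d₂, by rw [hsplit]; omega⟩
    · have hemp : ∀ x ∈ Set.Ioc a b, x ∉ Dfin p := by
        intro x hx hxD
        exact hS ⟨x, Finset.mem_filter.mpr ⟨hxD, hx⟩⟩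
      obtain ⟨hZ, hR⟩ := main_empty hp hab hemp
      exact ⟨0, by rw [hZ, hR]; simp⟩

end BF

open scoped Classical in
theorem budan_fourier (p : Polynomial ℝ) (a b : ℝ) (hab : a < b)
    (ha : p.eval a ≠ 0) (hb : p.eval b ≠ 0) :
    ((((p.roots.filter (fun r => a < r ∧ r < b)).card : ℤ)) ≤ (Zp p a : ℤ) - Zp p b) ∧
      Even ((Zp p a : ℤ) - (Zp p b : ℤ) -
        ((p.roots.filter (fun r => a < r ∧ r < b)).card : ℤ)) := by
  have hp : p ≠ 0 := fun h => ha (by simp [h])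
  obtain ⟨d, hd⟩ := BF.main hp ((BF.Dfin p).filter (· ∈ Set.Ioc a b)).card a b hab ha hb le_rfl
  have hoc : p.roots.filter (fun r => a < r ∧ r < b) =
      p.roots.filter (fun r => a < r ∧ r ≤ b) := by
    apply Multiset.filter_congr
    intro r hr
    constructor
    · rintro ⟨h1, h2⟩; exact ⟨h1, h2.le⟩
    · rintro ⟨h1, h2⟩
      refine ⟨h1, lt_of_le_of_ne h2 ?_⟩
      intro hrb
      exact hb (hrb ▸ Polynomial.isRoot_of_mem_roots hr)
  rw [hoc]
  constructor
  · rw [hd]; push_cast; omega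
  · refine ⟨d, ?_⟩; rw [hd]; push_cast; ring
end

section
/- Let p(x) be a real polynomial of degree n and Z_p(x) the number of sign changes in the sequence p(x), p'(x), ..., p^{(n)}(x). Then Z_p is non-increasing on ℝ: if x ≤ y then Z_p(x) ≥ Z_p(y). -/
lemma signChangesAux_single (a : ℝ) : signChangesAux [a] = 0 := rfl

lemma signChangesAux_cons (a b : ℝ) (t : List ℝ) :
    signChangesAux (a :: b :: t) = (if a * b < 0 then 1 else 0) + signChangesAux (b :: t) := by
  rfl

lemma sign_mul_iff {a b x y : ℝ} (hab : 0 < a * b) (hxy : 0 < x * y) :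
    (a * x < 0 ↔ b * y < 0) := by
  constructor <;> intro h <;> nlinarith [mul_pos hab hxy]

lemma sign_trans {x b b' : ℝ} (h1 : 0 < x * b') (h2 : 0 < b * b') : 0 < x * b := by
  nlinarith [mul_pos h1 h2, sq_nonneg b']

/-- Compatibility between a list `l` (values at the base point, possibly zero) and
a list `m` (values at a nearby point, all nonzero).  `r` relates consecutive entries
of `m` located at a zero of `l`. -/
inductive Compat (r : ℝ → ℝ → Prop) : List ℝ → List ℝ → Prop
  | single (a b : ℝ) (h : 0 < a * b) : Compat r [a] [b]
  | consNZ {l m : List ℝ} (a b : ℝ) (h : 0 < a * b) (hc : Compat r l m) :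
      Compat r (a :: l) (b :: m)
  | consZ {l m : List ℝ} (b b' : ℝ) (h : r b b') (hc : Compat r l (b' :: m)) :
      Compat r (0 :: l) (b :: b' :: m)

lemma Compat.nonzero {r : ℝ → ℝ → Prop} (hr : ∀ u v, r u v → u ≠ 0) :
    ∀ {l m : List ℝ}, Compat r l m → ∀ z ∈ m, z ≠ 0 := by
  intro l m h
  induction h with
  | single a b hab =>
      intro z hz; simp at hz; subst hz
      intro h0; rw [h0, mul_zero] at hab; exact lt_irrefl 0 hab
  | consNZ a b hab hc ih =>
      intro z hz
      rcases List.mem_cons.1 hz with rfl | hz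
      · intro h0; rw [h0, mul_zero] at hab; exact lt_irrefl 0 hab
      · exact ih z hz
  | consZ b b' hbb hc ih =>
      intro z hz
      rcases List.mem_cons.1 hz with rfl | hz
      · exact hr _ _ hbb
      · exact ih z hz

lemma compatR_eq : ∀ {l m : List ℝ}, Compat (fun u v => 0 < u * v) l m →
    ∃ x t y s, l.filter (fun x => decide (x ≠ 0)) = x :: t ∧ m = y :: s ∧ 0 < x * y ∧
      signChangesAux (l.filter (fun x => decide (x ≠ 0))) = signChangesAux m := by
  intro l m h
  induction h with
  | single a b hab =>
      have ha : a ≠ 0 := by intro h0; rw [h0, zero_mul] at hab; exact lt_irrefl 0 hab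
      refine ⟨a, [], b, [], ?_, rfl, hab, ?_⟩
      · simp [ha]
      · simp [ha, signChangesAux_single]
  | @consNZ l m a b hab hc ih =>
      obtain ⟨x, t, y, s, hf, rfl, hxy, heq⟩ := ih
      have ha : a ≠ 0 := by intro h0; rw [h0, zero_mul] at hab; exact lt_irrefl 0 hab
      have hfa : (a :: l).filter (fun x => decide (x ≠ 0)) = a :: x :: t := by
        rw [List.filter_cons_of_pos (by simp [ha]), hf]
      refine ⟨a, x :: t, b, y :: s, hfa, rfl, hab, ?_⟩
      rw [hfa, signChangesAux_cons, signChangesAux_cons, ← hf, heq,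
        if_congr (sign_mul_iff hab hxy) rfl rfl]
  | @consZ l m b b' hbb hc ih =>
      obtain ⟨x, t, y, s, hf, hm, hxy, heq⟩ := ih
      have hy : y = b' := by injection hm with h1 h2; exact h1.symm
      subst hy
      have hb : ¬ (b * y < 0) := not_lt.2 (le_of_lt hbb)
      have hxb : 0 < x * b := sign_trans hxy hbb
      refine ⟨x, t, b, y :: m, ?_, rfl, hxb, ?_⟩
      · rw [List.filter_cons_of_neg (by simp), hf]
      · have h0 : List.filter (fun x => decide (x ≠ 0)) (0 :: l) =
            List.filter (fun x => decide (x ≠ 0)) l := List.filter_cons_of_neg (by simp)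
        rw [h0, heq, hm, signChangesAux_cons, if_neg hb, zero_add]

lemma compatL_le : ∀ {l m : List ℝ}, Compat (fun u v => u * v < 0) l m →
    ∃ x t y s, l.filter (fun x => decide (x ≠ 0)) = x :: t ∧ m = y :: s ∧
      signChangesAux (l.filter (fun x => decide (x ≠ 0))) ≤ signChangesAux m ∧
      (0 < x * y ∨ signChangesAux (l.filter (fun x => decide (x ≠ 0))) + 1 ≤ signChangesAux m) := by
  intro l m h
  induction h with
  | single a b hab =>
      have ha : a ≠ 0 := by intro h0; rw [h0, zero_mul] at hab; exact lt_irrefl 0 hab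
      refine ⟨a, [], b, [], ?_, rfl, ?_, Or.inl hab⟩
      · simp [ha]
      · simp [ha, signChangesAux_single]
  | @consNZ l m a b hab hc ih =>
      obtain ⟨x, t, y, s, hf, rfl, hle, hor⟩ := ih
      have ha : a ≠ 0 := by intro h0; rw [h0, zero_mul] at hab; exact lt_irrefl 0 hab
      have hfa : (a :: l).filter (fun x => decide (x ≠ 0)) = a :: x :: t := by
        rw [List.filter_cons_of_pos (by simp [ha]), hf]
      refine ⟨a, x :: t, b, y :: s, hfa, rfl, ?_, Or.inl hab⟩
      rw [hfa, signChangesAux_cons, signChangesAux_cons]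
      rcases hor with hxy | hstrict
      · rw [if_congr (sign_mul_iff hab hxy) rfl rfl]
        exact Nat.add_le_add_left (by rw [← hf]; exact hle) _
      · calc (if a * x < 0 then 1 else 0) + signChangesAux (x :: t)
            ≤ 1 + signChangesAux (x :: t) := by
              exact Nat.add_le_add_right (by split <;> omega) _
          _ = signChangesAux (x :: t) + 1 := by omega
          _ ≤ signChangesAux (y :: s) := by rw [← hf]; exact hstrict
          _ ≤ _ := Nat.le_add_left _ _
  | @consZ l m b b' hbb hc ih =>
      obtain ⟨x, t, y, s, hf, hm, hle, hor⟩ := ih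
      have hy : y = b' := by injection hm with h1 h2; exact h1.symm
      subst hy
      have hb : b * y < 0 := hbb
      have h0 : List.filter (fun x => decide (x ≠ 0)) (0 :: l) =
          List.filter (fun x => decide (x ≠ 0)) l := List.filter_cons_of_neg (by simp)
      have hcount : signChangesAux (b :: y :: m) = 1 + signChangesAux (y :: m) := by
        rw [signChangesAux_cons, if_pos hb]
      have hstrict : signChangesAux (List.filter (fun x => decide (x ≠ 0)) (0 :: l)) + 1 ≤
          signChangesAux (b :: y :: m) := by
        rw [h0, hcount]
        have := hle
        rw [hm] at this
        omega
      exact ⟨x, t, b, y :: m, by rw [h0, hf], rfl, le_trans (by omega) hstrict, Or.inr hstrict⟩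

lemma compat_of_pointwise (r : ℝ → ℝ → Prop) (f g : ℕ → ℝ) (N : ℕ)
    (hN : 0 < f N * g N)
    (hnz : ∀ j ≤ N, f j ≠ 0 → 0 < f j * g j)
    (hz : ∀ j < N, f j = 0 → r (g j) (g (j + 1))) :
    Compat r ((List.range (N + 1)).map f) ((List.range (N + 1)).map g) := by
  have key : ∀ m i, 0 < m → i + m = N + 1 →
      Compat r ((List.range' i m).map f) ((List.range' i m).map g) := by
    intro m
    induction m with
    | zero => intro i h; omega
    | succ k ih =>
        intro i _ hik
        rw [List.range'_succ, List.map_cons, List.map_cons]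
        rcases Nat.eq_zero_or_pos k with rfl | hk
        · have hiN : i = N := by omega
          subst hiN
          simpa using Compat.single _ _ hN
        · have hiN : i < N := by omega
          have htail := ih (i + 1) hk (by omega)
          by_cases hfi : f i = 0
          · obtain ⟨k', rfl⟩ : ∃ k', k = k' + 1 := ⟨k - 1, by omega⟩
            rw [List.range'_succ, List.map_cons, List.map_cons] at htail ⊢
            rw [hfi]
            exact Compat.consZ _ _ (hz i hiN hfi) htail
          · exact Compat.consNZ _ _ (hnz i (le_of_lt hiN) hfi) htail
  have := key (N + 1) 0 (by omega) (by omega)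
  simpa [List.range_eq_range'] using this

open Polynomial Set Filter

lemma eval_mul_deriv_pos {q : Polynomial ℝ} {x₀ b : ℝ} (h0 : q.eval x₀ = 0) 
    (hne : ∀ t ∈ Ioo x₀ b, (Polynomial.derivative q).eval t ≠ 0) :
    ∀ y ∈ Ioo x₀ b, 0 < q.eval y * (Polynomial.derivative q).eval y := by
  intro y hy
  rcases (hne y hy).lt_or_gt with hneg | hpos
  · -- derivative negative at y; it is negative on (x₀, y)
    have hneg' : ∀ t ∈ Ioo x₀ y, (Polynomial.derivative q).eval t < 0 := by
      intro t ht
      rcases (hne t ⟨ht.1, ht.2.trans hy.2⟩).lt_or_gt with h | h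
      · exact h
      · exfalso
        have hcont : ContinuousOn (fun s => (Polynomial.derivative q).eval s) (Icc t y) :=
          (Polynomial.derivative q).continuous.continuousOn
        have h0' : (0 : ℝ) ∈ Ioo ((Polynomial.derivative q).eval y)
            ((Polynomial.derivative q).eval t) := ⟨hneg, h⟩
        have := intermediate_value_Ioo' (le_of_lt ht.2) hcont h0'
        obtain ⟨u, hu, hfu⟩ := this
        exact hne u ⟨ht.1.trans hu.1, hu.2.trans hy.2⟩ hfu
    have hanti : StrictAntiOn (fun t => q.eval t) (Icc x₀ y) := by
      apply strictAntiOn_of_deriv_neg (convex_Icc _ _) q.continuous.continuousOn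
      intro t ht
      rw [interior_Icc] at ht
      rw [Polynomial.deriv]
      exact hneg' t ht
    have hlt : q.eval y < 0 := by
      have := hanti (left_mem_Icc.2 (le_of_lt hy.1)) (right_mem_Icc.2 (le_of_lt hy.1)) hy.1
      simp only [] at this; rwa [h0] at this
    exact mul_pos_of_neg_of_neg hlt hneg
  · have hpos' : ∀ t ∈ Ioo x₀ y, 0 < (Polynomial.derivative q).eval t := by
      intro t ht
      rcases (hne t ⟨ht.1, ht.2.trans hy.2⟩).lt_or_gt with h | h
      · exfalso
        have hcont : ContinuousOn (fun s => (Polynomial.derivative q).eval s) (Icc t y) :=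
          (Polynomial.derivative q).continuous.continuousOn
        have h0' : (0 : ℝ) ∈ Ioo ((Polynomial.derivative q).eval t)
            ((Polynomial.derivative q).eval y) := ⟨h, hpos⟩
        obtain ⟨u, hu, hfu⟩ := intermediate_value_Ioo (le_of_lt ht.2) hcont h0'
        exact hne u ⟨ht.1.trans hu.1, hu.2.trans hy.2⟩ hfu
      · exact h
    have hmono : StrictMonoOn (fun t => q.eval t) (Icc x₀ y) := by
      apply strictMonoOn_of_deriv_pos (convex_Icc _ _) q.continuous.continuousOn
      intro t ht
      rw [interior_Icc] at ht
      rw [Polynomial.deriv]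
      exact hpos' t ht
    have hlt : 0 < q.eval y := by
      have := hmono (left_mem_Icc.2 (le_of_lt hy.1)) (right_mem_Icc.2 (le_of_lt hy.1)) hy.1
      simp only [] at this; rwa [h0] at this
    exact mul_pos hlt hpos

lemma eval_mul_deriv_neg {q : Polynomial ℝ} {x₀ a : ℝ} (h0 : q.eval x₀ = 0)
    (hne : ∀ t ∈ Ioo a x₀, (Polynomial.derivative q).eval t ≠ 0) :
    ∀ y ∈ Ioo a x₀, q.eval y * (Polynomial.derivative q).eval y < 0 := by
  intro y hy
  rcases (hne y hy).lt_or_gt with hneg | hpos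
  · -- derivative negative at y, negative on (y, x₀), so q strictly decreasing: q y > q x₀ = 0
    have hneg' : ∀ t ∈ Ioo y x₀, (Polynomial.derivative q).eval t < 0 := by
      intro t ht
      rcases (hne t ⟨hy.1.trans ht.1, ht.2⟩).lt_or_gt with h | h
      · exact h
      · exfalso
        have hcont : ContinuousOn (fun s => (Polynomial.derivative q).eval s) (Icc y t) :=
          (Polynomial.derivative q).continuous.continuousOn
        have h0' : (0 : ℝ) ∈ Ioo ((Polynomial.derivative q).eval y)
            ((Polynomial.derivative q).eval t) := ⟨hneg, h⟩
        obtain ⟨u, hu, hfu⟩ := intermediate_value_Ioo (le_of_lt ht.1) hcont h0'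
        exact hne u ⟨hy.1.trans hu.1, hu.2.trans ht.2⟩ hfu
    have hanti : StrictAntiOn (fun t => q.eval t) (Icc y x₀) := by
      apply strictAntiOn_of_deriv_neg (convex_Icc _ _) q.continuous.continuousOn
      intro t ht
      rw [interior_Icc] at ht
      rw [Polynomial.deriv]
      exact hneg' t ht
    have hgt : 0 < q.eval y := by
      have := hanti (left_mem_Icc.2 (le_of_lt hy.2)) (right_mem_Icc.2 (le_of_lt hy.2)) hy.2
      simp only [] at this; rwa [h0] at this
    exact mul_neg_of_pos_of_neg hgt hneg
  · have hpos' : ∀ t ∈ Ioo y x₀, 0 < (Polynomial.derivative q).eval t := by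
      intro t ht
      rcases (hne t ⟨hy.1.trans ht.1, ht.2⟩).lt_or_gt with h | h
      · exfalso
        have hcont : ContinuousOn (fun s => (Polynomial.derivative q).eval s) (Icc y t) :=
          (Polynomial.derivative q).continuous.continuousOn
        have h0' : (0 : ℝ) ∈ Ioo ((Polynomial.derivative q).eval t)
            ((Polynomial.derivative q).eval y) := ⟨h, hpos⟩
        obtain ⟨u, hu, hfu⟩ := intermediate_value_Ioo' (le_of_lt ht.1) hcont h0'
        exact hne u ⟨hy.1.trans hu.1, hu.2.trans ht.2⟩ hfu
      · exact h
    have hmono : StrictMonoOn (fun t => q.eval t) (Icc y x₀) := by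
      apply strictMonoOn_of_deriv_pos (convex_Icc _ _) q.continuous.continuousOn
      intro t ht
      rw [interior_Icc] at ht
      rw [Polynomial.deriv]
      exact hpos' t ht
    have hlt : q.eval y < 0 := by
      have := hmono (left_mem_Icc.2 (le_of_lt hy.2)) (right_mem_Icc.2 (le_of_lt hy.2)) hy.2
      simp only [] at this; rwa [h0] at this
    exact mul_neg_of_neg_of_pos hlt hpos

lemma deriv_iter_facts {p : Polynomial ℝ} (hp : p ≠ 0) :
    ∀ j ≤ p.natDegree, (Polynomial.derivative)^[j] p ≠ 0 ∧
      ((Polynomial.derivative)^[j] p).natDegree = p.natDegree - j := by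
  intro j
  induction j with
  | zero => intro _; exact ⟨hp, by simp⟩
  | succ k ih =>
      intro hk
      obtain ⟨hne, hdeg⟩ := ih (le_of_lt (Nat.lt_of_succ_le hk))
      have hpos : 0 < ((Polynomial.derivative)^[k] p).natDegree := by omega
      have hdd := Polynomial.degree_derivative_eq _ hpos
      rw [Function.iterate_succ_apply']
      constructor
      · intro h0
        rw [h0, Polynomial.degree_zero] at hdd
        exact absurd hdd.symm (by simp)
      · have := Polynomial.natDegree_eq_of_degree_eq_some hdd
        omega

lemma eventually_no_root {q : Polynomial ℝ} (hq : q ≠ 0) (x₀ : ℝ) :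
    ∀ᶠ y in nhdsWithin x₀ {x₀}ᶜ, q.eval y ≠ 0 := by
  have hfin : Set.Finite {x | q.IsRoot x} := q.finite_setOf_isRoot hq
  have hclosed : IsClosed ({x | q.IsRoot x} \ {x₀}) := hfin.diff.isClosed
  have hx : x₀ ∈ ({x | q.IsRoot x} \ {x₀})ᶜ := by simp
  have h1 : ∀ᶠ y in nhds x₀, y ∉ ({x | q.IsRoot x} \ {x₀}) :=
    eventually_of_mem (hclosed.isOpen_compl.mem_nhds hx) (fun y hy => hy)
  have h2 : ∀ᶠ y in nhdsWithin x₀ {x₀}ᶜ, y ≠ x₀ := eventually_mem_nhdsWithin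
  filter_upwards [h1.filter_mono nhdsWithin_le_nhds, h2] with y hy1 hy2 hroot
  exact hy1 ⟨hroot, hy2⟩

open Polynomial in
lemma zp_right (p : Polynomial ℝ) (hp : p ≠ 0) (x₀ : ℝ) :
    ∀ᶠ y in nhdsWithin x₀ (Set.Ioi x₀), Zp p y = Zp p x₀ := by
  classical
  set n := p.natDegree with hn
  set f : ℕ → ℝ := fun j => ((derivative)^[j] p).eval x₀ with hf
  have hder := deriv_iter_facts hp
  have hfn : f n ≠ 0 := by
    intro h0
    have hdeg : ((derivative)^[n] p).natDegree = 0 := by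
      have := (hder n (le_refl n)).2; omega
    have hC := Polynomial.eq_C_of_natDegree_eq_zero hdeg
    have : ((derivative)^[n] p).eval x₀ = ((derivative)^[n] p).coeff 0 := by
      rw [hC]; simp
    apply (hder n (le_refl n)).1
    rw [hC]
    rw [hf] at h0
    simp only [this] at h0
    rw [h0]; simp
  have hA : ∀ j, j ≤ n → f j ≠ 0 →
      ∀ᶠ y in nhdsWithin x₀ (Set.Ioi x₀), 0 < f j * ((derivative)^[j] p).eval y := by
    intro j _ hfj
    have hc : ContinuousAt (fun y => f j * ((derivative)^[j] p).eval y) x₀ :=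
      (continuous_const.mul ((derivative)^[j] p).continuous).continuousAt
    have hpos : (0:ℝ) < f j * ((derivative)^[j] p).eval x₀ := mul_self_pos.2 hfj
    exact (hc.eventually_const_lt hpos).filter_mono nhdsWithin_le_nhds
  have hB : ∀ j, j < n → f j = 0 →
      ∀ᶠ y in nhdsWithin x₀ (Set.Ioi x₀),
        0 < ((derivative)^[j] p).eval y * ((derivative)^[j+1] p).eval y := by
    intro j hj hfj
    have hq' : (derivative)^[j+1] p ≠ 0 := (hder (j+1) hj).1
    have hev : ∀ᶠ y in nhdsWithin x₀ (Set.Ioi x₀), ((derivative)^[j+1] p).eval y ≠ 0 :=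
      (eventually_no_root hq' x₀).filter_mono
        (nhdsWithin_mono _ (fun y hy => by simpa using ne_of_gt hy))
    obtain ⟨b, hb, hsub⟩ := mem_nhdsGT_iff_exists_Ioo_subset.1 hev
    have hkey := eval_mul_deriv_pos (q := (derivative)^[j] p) hfj
      (fun t ht => by
        have h2 : Polynomial.eval t ((derivative)^[j+1] p) ≠ 0 := hsub ht
        rwa [Function.iterate_succ_apply'] at h2)
    exact eventually_of_mem (Ioo_mem_nhdsGT_of_mem ⟨le_refl _, hb⟩)
      (fun y hy => by
        rw [Function.iterate_succ_apply']
        exact hkey y hy)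
  have hall : ∀ᶠ y in nhdsWithin x₀ (Set.Ioi x₀), ∀ j ∈ Finset.range (n+1),
      ((f j ≠ 0 → 0 < f j * ((derivative)^[j] p).eval y) ∧
       (j < n → f j = 0 → 0 < ((derivative)^[j] p).eval y * ((derivative)^[j+1] p).eval y)) := by
    rw [Filter.eventually_all_finset]
    intro j hj
    rw [Finset.mem_range] at hj
    refine Filter.Eventually.and ?_ ?_
    · by_cases hfj : f j = 0
      · exact Filter.Eventually.of_forall (fun y h => absurd hfj h)
      · exact (hA j (by omega) hfj).mono (fun y h _ => h)
    · by_cases hfj : f j = 0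
      · by_cases hjn : j < n
        · exact (hB j hjn hfj).mono (fun y h _ _ => h)
        · exact Filter.Eventually.of_forall (fun y h => absurd h hjn)
      · exact Filter.Eventually.of_forall (fun y _ h => absurd h hfj)
  filter_upwards [hall] with y hy
  set g : ℕ → ℝ := fun j => ((derivative)^[j] p).eval y with hg
  have hcomp : Compat (fun u v => 0 < u * v)
      ((List.range (n+1)).map f) ((List.range (n+1)).map g) := by
    apply compat_of_pointwise
    · exact (hy n (Finset.mem_range.2 (by omega))).1 hfn
    · intro j hj hfj
      exact (hy j (Finset.mem_range.2 (by omega))).1 hfj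
    · intro j hj hfj
      exact (hy j (Finset.mem_range.2 (by omega))).2 hj hfj
  obtain ⟨x, t, yy, s, hfil, hm, hxy, heq⟩ := compatR_eq hcomp
  have hnz' : ∀ z ∈ (List.range (n+1)).map g, z ≠ 0 :=
    hcomp.nonzero (fun u v h h0 => by rw [h0, zero_mul] at h; exact lt_irrefl 0 h)
  show signChanges _ = signChanges _
  unfold signChanges
  rw [List.filter_eq_self.2 (fun z hz => by simpa using hnz' z hz)]
  exact heq.symm

open Polynomial in
lemma zp_left (p : Polynomial ℝ) (hp : p ≠ 0) (x₀ : ℝ) :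
    ∀ᶠ y in nhdsWithin x₀ (Set.Iio x₀), Zp p x₀ ≤ Zp p y := by
  classical
  set n := p.natDegree with hn
  set f : ℕ → ℝ := fun j => ((derivative)^[j] p).eval x₀ with hf
  have hder := deriv_iter_facts hp
  have hfn : f n ≠ 0 := by
    intro h0
    have hdeg : ((derivative)^[n] p).natDegree = 0 := by
      have := (hder n (le_refl n)).2; omega
    have hC := Polynomial.eq_C_of_natDegree_eq_zero hdeg
    have : ((derivative)^[n] p).eval x₀ = ((derivative)^[n] p).coeff 0 := by
      rw [hC]; simp
    apply (hder n (le_refl n)).1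
    rw [hC]
    rw [hf] at h0
    simp only [this] at h0
    rw [h0]; simp
  have hA : ∀ j, j ≤ n → f j ≠ 0 →
      ∀ᶠ y in nhdsWithin x₀ (Set.Iio x₀), 0 < f j * ((derivative)^[j] p).eval y := by
    intro j _ hfj
    have hc : ContinuousAt (fun y => f j * ((derivative)^[j] p).eval y) x₀ :=
      (continuous_const.mul ((derivative)^[j] p).continuous).continuousAt
    have hpos : (0:ℝ) < f j * ((derivative)^[j] p).eval x₀ := mul_self_pos.2 hfj
    exact (hc.eventually_const_lt hpos).filter_mono nhdsWithin_le_nhds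
  have hB : ∀ j, j < n → f j = 0 →
      ∀ᶠ y in nhdsWithin x₀ (Set.Iio x₀),
        ((derivative)^[j] p).eval y * ((derivative)^[j+1] p).eval y < 0 := by
    intro j hj hfj
    have hq' : (derivative)^[j+1] p ≠ 0 := (hder (j+1) hj).1
    have hev : ∀ᶠ y in nhdsWithin x₀ (Set.Iio x₀), ((derivative)^[j+1] p).eval y ≠ 0 :=
      (eventually_no_root hq' x₀).filter_mono
        (nhdsWithin_mono _ (fun y hy => by simpa using ne_of_lt hy))
    obtain ⟨a, ha, hsub⟩ := mem_nhdsLT_iff_exists_Ioo_subset.1 hev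
    have hkey := eval_mul_deriv_neg (q := (derivative)^[j] p) hfj
      (fun t ht => by
        have h2 : Polynomial.eval t ((derivative)^[j+1] p) ≠ 0 := hsub ht
        rwa [Function.iterate_succ_apply'] at h2)
    exact eventually_of_mem (Ioo_mem_nhdsLT_of_mem ⟨ha, le_refl _⟩)
      (fun y hy => by
        rw [Function.iterate_succ_apply']
        exact hkey y hy)
  have hall : ∀ᶠ y in nhdsWithin x₀ (Set.Iio x₀), ∀ j ∈ Finset.range (n+1),
      ((f j ≠ 0 → 0 < f j * ((derivative)^[j] p).eval y) ∧
       (j < n → f j = 0 → ((derivative)^[j] p).eval y * ((derivative)^[j+1] p).eval y < 0)) := by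
    rw [Filter.eventually_all_finset]
    intro j hj
    rw [Finset.mem_range] at hj
    refine Filter.Eventually.and ?_ ?_
    · by_cases hfj : f j = 0
      · exact Filter.Eventually.of_forall (fun y h => absurd hfj h)
      · exact (hA j (by omega) hfj).mono (fun y h _ => h)
    · by_cases hfj : f j = 0
      · by_cases hjn : j < n
        · exact (hB j hjn hfj).mono (fun y h _ _ => h)
        · exact Filter.Eventually.of_forall (fun y h => absurd h hjn)
      · exact Filter.Eventually.of_forall (fun y _ h => absurd h hfj)
  filter_upwards [hall] with y hy
  set g : ℕ → ℝ := fun j => ((derivative)^[j] p).eval y with hg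
  have hcomp : Compat (fun u v => u * v < 0)
      ((List.range (n+1)).map f) ((List.range (n+1)).map g) := by
    apply compat_of_pointwise
    · exact (hy n (Finset.mem_range.2 (by omega))).1 hfn
    · intro j hj hfj
      exact (hy j (Finset.mem_range.2 (by omega))).1 hfj
    · intro j hj hfj
      exact (hy j (Finset.mem_range.2 (by omega))).2 hj hfj
  obtain ⟨x, t, yy, s, hfil, hm, hle, _⟩ := compatL_le hcomp
  have hnz' : ∀ z ∈ (List.range (n+1)).map g, z ≠ 0 :=
    hcomp.nonzero (fun u v h h0 => by rw [h0, zero_mul] at h; exact lt_irrefl 0 h)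
  show signChanges _ ≤ signChanges _
  unfold signChanges
  rw [← hn, ← hf, ← hg]
  have hgy : List.filter (fun x => decide (x ≠ 0)) (List.map g (List.range (n+1)))
      = List.map g (List.range (n+1)) :=
    List.filter_eq_self.2 (fun z hz => by simpa using hnz' z hz)
  rw [hgy]
  exact hle

lemma antitone_of_local (f : ℝ → ℕ)
    (hR : ∀ x, ∀ᶠ y in nhdsWithin x (Set.Ioi x), f y = f x)
    (hL : ∀ x, ∀ᶠ y in nhdsWithin x (Set.Iio x), f x ≤ f y) : Antitone f := by
  intro a b hab
  rcases eq_or_lt_of_le hab with rfl | hab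
  · exact le_refl _
  set S := {t | t ∈ Set.Icc a b ∧ f t ≤ f a} with hS
  have hne : a ∈ S := ⟨⟨le_refl a, le_of_lt hab⟩, le_refl _⟩
  have hbdd : BddAbove S := ⟨b, fun t ht => ht.1.2⟩
  set c := sSup S with hc
  have hac : a ≤ c := le_csSup hbdd hne
  have hcb : c ≤ b := csSup_le ⟨a, hne⟩ (fun t ht => ht.1.2)
  have hfc : f c ≤ f a := by
    rcases eq_or_lt_of_le hac with heq | hlt
    · rw [← heq]
    · obtain ⟨u, hu, hsub⟩ := mem_nhdsLT_iff_exists_Ioo_subset.1 (hL c)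
      have hu' : max u a < c := max_lt hu hlt
      obtain ⟨t, htS, htgt⟩ := exists_lt_of_lt_csSup ⟨a, hne⟩ hu'
      rcases eq_or_lt_of_le (le_csSup hbdd htS) with h | h
      · rw [hc, ← h]; exact htS.2
      · have hmem : t ∈ Set.Ioo u c := ⟨lt_of_le_of_lt (le_max_left _ _) htgt, h⟩
        exact le_trans (hsub hmem) htS.2
  rcases eq_or_lt_of_le hcb with heq | hlt
  · rw [← heq]; exact hfc
  · exfalso
    obtain ⟨u, hu, hsub⟩ := mem_nhdsGT_iff_exists_Ioo_subset.1 (hR c)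
    obtain ⟨y, hy1, hy2⟩ := exists_between (lt_min hu hlt)
    have hyu : y ∈ Set.Ioo c u := ⟨hy1, lt_of_lt_of_le hy2 (min_le_left _ _)⟩
    have hyb : y ≤ b := le_of_lt (lt_of_lt_of_le hy2 (min_le_right _ _))
    have hyS : y ∈ S := ⟨⟨le_trans hac (le_of_lt hy1), hyb⟩, by
      rw [hsub hyu]; exact hfc⟩
    exact absurd (le_csSup hbdd hyS) (not_le.2 hy1)

theorem Zp_antitone (p : Polynomial ℝ) : Antitone (Zp p) := by
  by_cases hp : p = 0
  · subst hp
    have : ∀ x, Zp 0 x = 0 := by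
      intro x
      unfold Zp signChanges
      simp [signChangesAux]
    intro a b _
    rw [this a, this b]
  · exact antitone_of_local (Zp p) (zp_right p hp) (zp_left p hp)
end

section
/- Fix λ ∈ (0,1/2), an integer n ≥ 1, and an integer k with λn ≤ k ≤ (1−λ)n. Define A_{k,l} = l(l−1)⋯(l−k+1). Then for all integers j₁, j₂ with (1−λ/2)n ≤ j₂ ≤ j₁ ≤ n, one has A_{k,j₂}/A_{k,j₁} ≤ exp(−(λ/2)(j₁ − j₂)). -/
theorem descFactorial_ratio_exp_bound (lam : ℝ) (hlam : lam ∈ Set.Ioo (0 : ℝ) (1 / 2))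
    (n k : ℕ) (hn : 1 ≤ n) (hk₁ : lam * n ≤ k) (hk₂ : (k : ℝ) ≤ (1 - lam) * n)
    (j₁ j₂ : ℕ) (hj₂ : (1 - lam / 2) * n ≤ (j₂ : ℝ)) (hj : j₂ ≤ j₁) (hj₁ : j₁ ≤ n) :
    (j₂.descFactorial k : ℝ) / (j₁.descFactorial k : ℝ) ≤
      Real.exp (-(lam / 2) * ((j₁ : ℝ) - (j₂ : ℝ))) := by
  obtain ⟨hl0, hl2⟩ := hlam
  have hn' : (0:ℝ) < n := by exact_mod_cast hn
  have hkj₂ : k ≤ j₂ := by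
    have : (k:ℝ) < j₂ := by nlinarith
    exact_mod_cast this.le
  have hpos2 : (0:ℝ) < (j₂.descFactorial k : ℝ) := by
    exact_mod_cast Nat.pos_of_ne_zero (fun h => absurd (Nat.descFactorial_eq_zero_iff_lt.mp h) (Nat.not_lt.mpr hkj₂))
  revert hj₁
  induction j₁, hj using Nat.le_induction with
  | base =>
      intro hj₁
      rw [sub_self, mul_zero, Real.exp_zero, div_self hpos2.ne']
  | succ m hm ih =>
      intro hj₁
      have hmn : m < n := hj₁
      have ih' := ih hmn.le
      have hkm : k ≤ m := hkj₂.trans hm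
      have hposm : (0:ℝ) < (m.descFactorial k : ℝ) := by
        exact_mod_cast Nat.pos_of_ne_zero (fun h => absurd (Nat.descFactorial_eq_zero_iff_lt.mp h) (Nat.not_lt.mpr hkm))
      have hposm1 : (0:ℝ) < ((m+1).descFactorial k : ℝ) := by
        exact_mod_cast Nat.pos_of_ne_zero (fun h => absurd (Nat.descFactorial_eq_zero_iff_lt.mp h) (Nat.not_lt.mpr (hkm.trans (Nat.le_succ m))))
      have key : ((m + 1 - k : ℕ) : ℝ) * ((m+1).descFactorial k : ℝ)
          = ((m:ℝ) + 1) * (m.descFactorial k : ℝ) := by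
        exact_mod_cast congrArg (Nat.cast (R := ℝ)) (Nat.succ_descFactorial m k)
      have hcast : ((m + 1 - k : ℕ) : ℝ) = (m:ℝ) + 1 - k := by
        push_cast [Nat.sub_add_comm] ; rw [Nat.cast_sub (hkm.trans (Nat.le_succ m))] ; push_cast ; ring
      rw [hcast] at key
      have hm1 : (0:ℝ) < (m:ℝ) + 1 := by positivity
      -- ratio identity
      have hratio : (j₂.descFactorial k : ℝ) / ((m+1).descFactorial k : ℝ)
          = (j₂.descFactorial k : ℝ) / (m.descFactorial k : ℝ) * (((m:ℝ)+1-k) / ((m:ℝ)+1)) := by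
        field_simp
        nlinarith [key]
      -- single step bound
      have hx : lam / 2 ≤ (k:ℝ) / ((m:ℝ)+1) := by
        rw [le_div_iff₀ hm1]
        have hmn' : (m:ℝ) + 1 ≤ n := by exact_mod_cast hj₁
        nlinarith
      have hstep : ((m:ℝ)+1-k) / ((m:ℝ)+1) ≤ Real.exp (-(lam/2)) := by
        have h1 : ((m:ℝ)+1-k) / ((m:ℝ)+1) = 1 - (k:ℝ)/((m:ℝ)+1) := by
          field_simp
        rw [h1]
        calc 1 - (k:ℝ)/((m:ℝ)+1) ≤ Real.exp (-((k:ℝ)/((m:ℝ)+1))) := by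
              have := Real.add_one_le_exp (-((k:ℝ)/((m:ℝ)+1)))
              linarith
          _ ≤ Real.exp (-(lam/2)) := Real.exp_le_exp.mpr (by linarith)
      have hnn : 0 ≤ (j₂.descFactorial k : ℝ) / (m.descFactorial k : ℝ) := by positivity
      have hnn2 : 0 ≤ ((m:ℝ)+1-k) / ((m:ℝ)+1) := by
        apply div_nonneg _ hm1.le
        have : (k:ℝ) ≤ m := by exact_mod_cast hkm
        linarith
      rw [hratio]
      calc (j₂.descFactorial k : ℝ) / (m.descFactorial k : ℝ) * (((m:ℝ)+1-k) / ((m:ℝ)+1))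
          ≤ Real.exp (-(lam / 2) * ((m : ℝ) - (j₂ : ℝ))) * Real.exp (-(lam/2)) :=
            mul_le_mul ih' hstep hnn2 (Real.exp_nonneg _)
        _ = Real.exp (-(lam / 2) * (((m:ℕ)+1 : ℝ) - (j₂ : ℝ))) := by
            rw [← Real.exp_add]; ring_nf
        _ ≤ Real.exp (-(lam / 2) * (((m+1:ℕ) : ℝ) - (j₂ : ℝ))) := by push_cast; exact le_refl _
end
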